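/- Let U, V be unitary operators on Hilbert spaces H_1, H_2, and suppose there is a sequence (n_t) of integers and complex numbers a ≠ b such that U^{n_t} → aI and V^{n_t} → bI in the weak operator topology. Then the measures of maximal spectral type of U and V are mutually singular. -/

import Mathlib

open MeasureTheory Filter
open scoped ENNReal

noncomputable instance : MeasurableSpace Circle := borel Circle
instance : BorelSpace Circle := ⟨rfl⟩

variable {H : Type*} [NormedAddCommGroup H] [InnerProductSpace ℂ H] [CompleteSpace H]

/-- `ν` is the spectral measure of the vector `ξ` for the unitary `U`:
its Fourier coefficients are `⟨U^n ξ, ξ⟩`. -/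
def IsSpectralMeasureOf (U : H ≃ₗᵢ[ℂ] H) (ξ : H) (ν : Measure Circle) : Prop :=
  ∀ n : ℤ, ∫ z : Circle, (z : ℂ) ^ n ∂ν = (inner ℂ ((U ^ n) ξ) ξ : ℂ)

/-- `ν` is a measure of maximal spectral type for the unitary `U`: it is the spectral
measure of some vector, and the spectral measure of every vector is absolutely
continuous with respect to it. -/
def IsMaximalSpectralType (U : H ≃ₗᵢ[ℂ] H) (ν : Measure Circle) : Prop :=
  (∃ ξ : H, IsSpectralMeasureOf U ξ ν) ∧
    ∀ (η : H) (ρ : Measure Circle), IsSpectralMeasureOf U η ρ → ρ ≪ ν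

lemma Circle.coe_zpow' (z : Circle) (j : ℤ) : ((z ^ j : Circle) : ℂ) = (z : ℂ) ^ j :=
  map_zpow' Circle.coeHom Circle.coe_inv z j

/-- The character `z ↦ z^j` on the circle, as a continuous map. -/
noncomputable def circChar (j : ℤ) : C(Circle, ℂ) :=
  ⟨fun z => ((z ^ j : Circle) : ℂ), by continuity⟩

lemma circChar_apply (j : ℤ) (z : Circle) : circChar j z = (z : ℂ) ^ j :=
  Circle.coe_zpow' z j

lemma circChar_mul (i j : ℤ) : circChar i * circChar j = circChar (i + j) := by
  ext z
  simp [circChar_apply, zpow_add₀ (Circle.coe_ne_zero z)]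

lemma circChar_star (j : ℤ) : star (circChar j) = circChar (-j) := by
  ext z
  simp only [ContinuousMap.star_apply, circChar_apply, zpow_neg]
  rw [← Circle.coe_zpow', ← Circle.coe_inv, Circle.coe_inv_eq_conj, Circle.coe_zpow']
  rfl

lemma circChar_zero : circChar 0 = 1 := by ext z; simp [circChar_apply]

/-- The span of the characters. -/
noncomputable def charSpan : Submodule ℂ C(Circle, ℂ) := Submodule.span ℂ (Set.range circChar)

lemma circChar_mem (j : ℤ) : circChar j ∈ charSpan := Submodule.subset_span ⟨j, rfl⟩

lemma charSpan_mul_mem {p q : C(Circle, ℂ)} (hp : p ∈ charSpan) (hq : q ∈ charSpan) :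
    p * q ∈ charSpan := by
  induction hp using Submodule.span_induction generalizing q with
  | mem x hx =>
    obtain ⟨i, rfl⟩ := hx
    induction hq using Submodule.span_induction with
    | mem y hy => obtain ⟨j, rfl⟩ := hy; rw [circChar_mul]; exact circChar_mem _
    | zero => simpa using charSpan.zero_mem
    | add y z _ _ hy hz => rw [mul_add]; exact charSpan.add_mem hy hz
    | smul c y _ hy => rw [mul_smul_comm]; exact charSpan.smul_mem c hy
  | zero => simpa using charSpan.zero_mem
  | add x y _ _ hx hy => rw [add_mul]; exact charSpan.add_mem (hx hq) (hy hq)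
  | smul c x _ hx => rw [smul_mul_assoc]; exact charSpan.smul_mem c (hx hq)

lemma charSpan_star_mem {p : C(Circle, ℂ)} (hp : p ∈ charSpan) : star p ∈ charSpan := by
  induction hp using Submodule.span_induction with
  | mem x hx => obtain ⟨j, rfl⟩ := hx; rw [circChar_star]; exact circChar_mem _
  | zero => simpa using charSpan.zero_mem
  | add x y _ _ hx hy => rw [star_add]; exact charSpan.add_mem hx hy
  | smul c x _ hx => rw [star_smul]; exact charSpan.smul_mem _ hx

lemma charSpan_algebraMap_mem (c : ℂ) : (algebraMap ℂ C(Circle, ℂ)) c ∈ charSpan := by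
  have h1 : (algebraMap ℂ C(Circle, ℂ)) c = c • circChar 0 := by
    rw [circChar_zero]; simp [Algebra.algebraMap_eq_smul_one]
  rw [h1]
  exact charSpan.smul_mem c (circChar_mem 0)

/-- The characters' span as a star subalgebra. -/
noncomputable def charAlg : StarSubalgebra ℂ C(Circle, ℂ) where
  carrier := charSpan
  mul_mem' := charSpan_mul_mem
  add_mem' := charSpan.add_mem
  algebraMap_mem' := charSpan_algebraMap_mem
  star_mem' := charSpan_star_mem

lemma charAlg_dense : charAlg.topologicalClosure = ⊤ := by
  apply ContinuousMap.starSubalgebra_topologicalClosure_eq_top_of_separatesPoints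
  intro x y hxy
  refine ⟨_, ⟨circChar 1, (circChar_mem 1 : circChar 1 ∈ charAlg), rfl⟩, ?_⟩
  simp only [circChar_apply, zpow_one]
  exact fun h => hxy (Subtype.ext h)

lemma contMap_integrable (ν : Measure Circle) [IsFiniteMeasure ν] (f : C(Circle, ℂ)) :
    Integrable f ν :=
  f.continuous.integrable_of_hasCompactSupport (HasCompactSupport.of_compactSpace f)

lemma norm_zpow_circle (z : Circle) (m : ℤ) : ‖(z : ℂ) ^ m‖ = 1 := by
  rw [norm_zpow, Circle.norm_coe, one_zpow]

lemma tendsto_integral_char_mul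
    (ν : Measure Circle) [IsFiniteMeasure ν] (c : ℂ) (n : ℕ → ℤ)
    (h : ∀ j : ℤ, Filter.Tendsto (fun t => ∫ z : Circle, (z : ℂ) ^ (n t + j) ∂ν) Filter.atTop
      (nhds (c * ∫ z : Circle, (z : ℂ) ^ j ∂ν)))
    {p : C(Circle, ℂ)} (hp : p ∈ charSpan) :
    Filter.Tendsto (fun t => ∫ z : Circle, (z : ℂ) ^ (n t) * p z ∂ν) Filter.atTop
      (nhds (c * ∫ z : Circle, p z ∂ν)) := by
  induction hp using Submodule.span_induction with
  | mem x hx =>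
    obtain ⟨j, rfl⟩ := hx
    have e1 : ∀ t, ∫ z : Circle, (z : ℂ) ^ (n t) * circChar j z ∂ν
        = ∫ z : Circle, (z : ℂ) ^ (n t + j) ∂ν := by
      intro t
      refine integral_congr_ae (Filter.Eventually.of_forall fun z => ?_)
      show (z : ℂ) ^ (n t) * circChar j z = (z : ℂ) ^ (n t + j)
      rw [circChar_apply, ← zpow_add₀ (Circle.coe_ne_zero z)]
    have e2 : ∫ z : Circle, circChar j z ∂ν = ∫ z : Circle, (z : ℂ) ^ j ∂ν :=
      integral_congr_ae (Filter.Eventually.of_forall fun z => circChar_apply j z)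
    simp only [e1, e2]
    exact h j
  | zero => simpa using tendsto_const_nhds
  | add x y hxm hym hx hy =>
    have e1 : ∀ t, ∫ z : Circle, (z : ℂ) ^ (n t) * (x + y) z ∂ν
        = (∫ z : Circle, (z : ℂ) ^ (n t) * x z ∂ν) + ∫ z : Circle, (z : ℂ) ^ (n t) * y z ∂ν := by
      intro t
      rw [← integral_add]
      · refine integral_congr_ae (Filter.Eventually.of_forall fun z => ?_)
        simp [mul_add]
      · exact (contMap_integrable ν (circChar (n t) * x)).congr
          (Filter.Eventually.of_forall fun z => by simp [circChar_apply])
      · exact (contMap_integrable ν (circChar (n t) * y)).congr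
          (Filter.Eventually.of_forall fun z => by simp [circChar_apply])
    have e2 : ∫ z : Circle, (x + y) z ∂ν = (∫ z : Circle, x z ∂ν) + ∫ z : Circle, y z ∂ν := by
      rw [← integral_add (contMap_integrable ν x) (contMap_integrable ν y)]
      rfl
    simp only [e1, e2, mul_add]
    exact hx.add hy
  | smul r x hxm hx =>
    have e1 : ∀ t, ∫ z : Circle, (z : ℂ) ^ (n t) * (r • x) z ∂ν
        = r * ∫ z : Circle, (z : ℂ) ^ (n t) * x z ∂ν := by
      intro t
      rw [← smul_eq_mul, ← integral_smul]
      refine integral_congr_ae (Filter.Eventually.of_forall fun z => ?_)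
      show (z : ℂ) ^ (n t) * (r • x) z = r • ((z : ℂ) ^ (n t) * x z)
      simp only [ContinuousMap.smul_apply, smul_eq_mul]
      ring
    have e2 : ∫ z : Circle, (r • x) z ∂ν = r * ∫ z : Circle, x z ∂ν := by
      rw [← smul_eq_mul, ← integral_smul]
      refine integral_congr_ae (Filter.Eventually.of_forall fun z => ?_)
      simp
    simp only [e1, e2]
    have := hx.const_mul r
    convert this using 2
    ring

/-- Key approximation lemma: if the Fourier-type integrals of `ν` along `n t` converge
suitably, then `∫ z^{n t} g dν → c ∫ g dν` for every integrable `g`. -/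
lemma tendsto_integral_mul_of_integrable
    (ν : Measure Circle) [IsFiniteMeasure ν] (c : ℂ) (n : ℕ → ℤ)
    (h : ∀ j : ℤ, Filter.Tendsto (fun t => ∫ z : Circle, (z : ℂ) ^ (n t + j) ∂ν) Filter.atTop
      (nhds (c * ∫ z : Circle, (z : ℂ) ^ j ∂ν)))
    {g : Circle → ℂ} (hg : Integrable g ν) :
    Filter.Tendsto (fun t => ∫ z : Circle, (z : ℂ) ^ (n t) * g z ∂ν) Filter.atTop
      (nhds (c * ∫ z : Circle, g z ∂ν)) := by
  rw [Metric.tendsto_atTop]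
  intro ε hε
  set δ : ℝ := ε / (2 * (‖c‖ + 1)) with hδ_def
  have hδpos : 0 < δ := by positivity
  -- first approximate `g` by a bounded continuous function in `L¹`
  obtain ⟨h₀, hh₀, hh₀int⟩ := hg.exists_boundedContinuous_integral_sub_le (half_pos hδpos)
  -- then approximate `h₀` uniformly by a trigonometric polynomial
  set κ : ℝ := (ν Set.univ).toReal + 1 with hκ_def
  have hκpos : 0 < κ := by positivity
  have hmem : h₀.toContinuousMap ∈ charAlg.topologicalClosure := by
    rw [charAlg_dense]; trivial
  have hmem' : h₀.toContinuousMap ∈ closure (charAlg : Set C(Circle, ℂ)) := hmem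
  rw [Metric.mem_closure_iff] at hmem'
  obtain ⟨p, hpA, hpd⟩ := hmem' (δ / 2 / κ) (by positivity)
  have hpspan : p ∈ charSpan := hpA
  -- the total L¹ distance between `g` and `p`
  have hint_p : Integrable p ν := contMap_integrable ν p
  have hint_h₀ : Integrable h₀ ν := hh₀int
  have hD : ∫ z : Circle, ‖g z - p z‖ ∂ν ≤ δ := by
    have step1 : ∫ z : Circle, ‖g z - p z‖ ∂ν
        ≤ (∫ z : Circle, ‖g z - h₀ z‖ ∂ν) + ∫ z : Circle, ‖h₀ z - p z‖ ∂ν := by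
      calc ∫ z : Circle, ‖g z - p z‖ ∂ν
          ≤ ∫ z : Circle, (‖g z - h₀ z‖ + ‖h₀ z - p z‖) ∂ν := by
            refine integral_mono ((hg.sub hint_p).norm)
              (((hg.sub hint_h₀).norm).add ((hint_h₀.sub hint_p).norm)) fun z => ?_
            calc ‖g z - p z‖ = ‖(g z - h₀ z) + (h₀ z - p z)‖ := by ring_nf
              _ ≤ ‖g z - h₀ z‖ + ‖h₀ z - p z‖ := norm_add_le _ _
        _ = (∫ z : Circle, ‖g z - h₀ z‖ ∂ν) + ∫ z : Circle, ‖h₀ z - p z‖ ∂ν :=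
            integral_add ((hg.sub hint_h₀).norm) ((hint_h₀.sub hint_p).norm)
    have step2 : ∫ z : Circle, ‖h₀ z - p z‖ ∂ν ≤ δ / 2 := by
      have hb : ∀ z : Circle, ‖h₀ z - p z‖ ≤ δ / 2 / κ := fun z => by
        have := ContinuousMap.dist_apply_le_dist (f := h₀.toContinuousMap) (g := p) z
        rw [dist_eq_norm] at this
        exact le_trans this hpd.le
      calc ∫ z : Circle, ‖h₀ z - p z‖ ∂ν ≤ ∫ _z : Circle, δ / 2 / κ ∂ν :=
            integral_mono ((hint_h₀.sub hint_p).norm) (integrable_const _) hb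
        _ = (ν Set.univ).toReal * (δ / 2 / κ) := by
            rw [integral_const, smul_eq_mul]; rfl
        _ ≤ κ * (δ / 2 / κ) := by
            apply mul_le_mul_of_nonneg_right _ (by positivity)
            rw [hκ_def]; linarith
        _ = δ / 2 := by field_simp
    linarith
  -- convergence for `p`
  have hp_t := tendsto_integral_char_mul ν c n h hpspan
  rw [Metric.tendsto_atTop] at hp_t
  obtain ⟨N, hN⟩ := hp_t (ε / 2) (half_pos hε)
  refine ⟨N, fun t ht => ?_⟩
  have hint_zg : Integrable (fun z : Circle => (z : ℂ) ^ (n t) * g z) ν :=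
    hg.bdd_mul ((circChar (n t)).continuous.aestronglyMeasurable.congr
      (Filter.Eventually.of_forall fun z => circChar_apply (n t) z))
      (Filter.Eventually.of_forall fun z => (norm_zpow_circle z (n t)).le)
  have hint_zp : Integrable (fun z : Circle => (z : ℂ) ^ (n t) * p z) ν :=
    hint_p.bdd_mul ((circChar (n t)).continuous.aestronglyMeasurable.congr
      (Filter.Eventually.of_forall fun z => circChar_apply (n t) z))
      (Filter.Eventually.of_forall fun z => (norm_zpow_circle z (n t)).le)
  -- bound the two correction terms by `D ≤ δ`
  have key1 : ‖(∫ z : Circle, (z : ℂ) ^ (n t) * g z ∂ν)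
      - ∫ z : Circle, (z : ℂ) ^ (n t) * p z ∂ν‖ ≤ δ := by
    rw [← integral_sub hint_zg hint_zp]
    calc ‖∫ z : Circle, ((z : ℂ) ^ (n t) * g z - (z : ℂ) ^ (n t) * p z) ∂ν‖
        ≤ ∫ z : Circle, ‖(z : ℂ) ^ (n t) * g z - (z : ℂ) ^ (n t) * p z‖ ∂ν :=
          norm_integral_le_integral_norm _
      _ = ∫ z : Circle, ‖g z - p z‖ ∂ν := by
          refine integral_congr_ae (Filter.Eventually.of_forall fun z => ?_)
          show ‖(z : ℂ) ^ (n t) * g z - (z : ℂ) ^ (n t) * p z‖ = ‖g z - p z‖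
          rw [← mul_sub, norm_mul, norm_zpow_circle, one_mul]
      _ ≤ δ := hD
  have key2 : ‖c * (∫ z : Circle, p z ∂ν) - c * ∫ z : Circle, g z ∂ν‖ ≤ ‖c‖ * δ := by
    rw [← mul_sub, norm_mul]
    refine mul_le_mul_of_nonneg_left ?_ (norm_nonneg c)
    rw [← integral_sub hint_p hg]
    calc ‖∫ z : Circle, (p z - g z) ∂ν‖ ≤ ∫ z : Circle, ‖p z - g z‖ ∂ν :=
          norm_integral_le_integral_norm _
      _ = ∫ z : Circle, ‖g z - p z‖ ∂ν := by
          refine integral_congr_ae (Filter.Eventually.of_forall fun z => ?_)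
          show ‖p z - g z‖ = ‖g z - p z‖
          rw [norm_sub_rev]
      _ ≤ δ := hD
  have key3 := hN t ht
  rw [dist_eq_norm] at key3 ⊢
  have expand : (∫ z : Circle, (z : ℂ) ^ (n t) * g z ∂ν) - c * ∫ z : Circle, g z ∂ν
      = ((∫ z : Circle, (z : ℂ) ^ (n t) * g z ∂ν) - ∫ z : Circle, (z : ℂ) ^ (n t) * p z ∂ν)
        + ((∫ z : Circle, (z : ℂ) ^ (n t) * p z ∂ν) - c * ∫ z : Circle, p z ∂ν)
        + (c * (∫ z : Circle, p z ∂ν) - c * ∫ z : Circle, g z ∂ν) := by ring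
  rw [expand]
  have hcδ : δ + ‖c‖ * δ ≤ ε / 2 := by
    have : δ * (‖c‖ + 1) = ε / 2 := by
      rw [hδ_def]; field_simp
    nlinarith [norm_nonneg c]
  calc ‖_ + _ + _‖ ≤ ‖_ + _‖ + ‖_‖ := norm_add_le _ _
    _ ≤ ‖_‖ + ‖_‖ + ‖_‖ := by gcongr; exact norm_add_le _ _
    _ < δ + ε / 2 + ‖c‖ * δ := by
        apply add_lt_add_of_lt_of_le _ key2
        exact add_lt_add_of_le_of_lt key1 key3
    _ ≤ ε := by linarith

lemma tendsto_integral_zpow_of_ac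
    (ν : Measure Circle) [IsFiniteMeasure ν] (c : ℂ) (n : ℕ → ℤ)
    (h : ∀ j : ℤ, Filter.Tendsto (fun t => ∫ z : Circle, (z : ℂ) ^ (n t + j) ∂ν) Filter.atTop
      (nhds (c * ∫ z : Circle, (z : ℂ) ^ j ∂ν)))
    (ρ : Measure Circle) [IsFiniteMeasure ρ] (hρ : ρ ≪ ν) :
    Filter.Tendsto (fun t => ∫ z : Circle, (z : ℂ) ^ (n t) ∂ρ) Filter.atTop
      (nhds (c * ((ρ Set.univ).toReal : ℂ))) := by
  have hg : Integrable (fun z : Circle => ((ρ.rnDeriv ν z).toReal : ℂ)) ν :=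
    (Measure.integrable_toReal_rnDeriv).ofReal
  have e1 : ∀ t, ∫ z : Circle, (z : ℂ) ^ (n t) ∂ρ
      = ∫ z : Circle, (z : ℂ) ^ (n t) * ((ρ.rnDeriv ν z).toReal : ℂ) ∂ν := by
    intro t
    rw [← MeasureTheory.integral_rnDeriv_smul hρ (f := fun z : Circle => (z : ℂ) ^ (n t))]
    refine integral_congr_ae (Filter.Eventually.of_forall fun z => ?_)
    show (ρ.rnDeriv ν z).toReal • (z : ℂ) ^ (n t) = (z : ℂ) ^ (n t) * ((ρ.rnDeriv ν z).toReal : ℂ)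
    rw [Complex.real_smul, mul_comm]
  have e2 : ∫ z : Circle, ((ρ.rnDeriv ν z).toReal : ℂ) ∂ν = ((ρ Set.univ).toReal : ℂ) := by
    have h1 := integral_ofReal (𝕜 := ℂ) (μ := ν) (f := fun z => (ρ.rnDeriv ν z).toReal)
    rw [show (fun z : Circle => ((ρ.rnDeriv ν z).toReal : ℂ)) = fun z : Circle =>
      (RCLike.ofReal ((ρ.rnDeriv ν z).toReal) : ℂ) from rfl, h1,
      Measure.integral_toReal_rnDeriv hρ]
    norm_cast
  simp only [e1]
  rw [← e2]
  exact tendsto_integral_mul_of_integrable ν c n h hg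

lemma fourier_hyp_of_weak {U : H ≃ₗᵢ[ℂ] H} {ξ : H} {ν : Measure Circle}
    (hξ : IsSpectralMeasureOf U ξ ν) (n : ℕ → ℤ) (a : ℂ)
    (hU : ∀ ζ η : H, Tendsto (fun t => (inner ℂ ((U ^ n t) ζ) η : ℂ)) atTop
      (nhds (a * (inner ℂ ζ η : ℂ)))) (j : ℤ) :
    Tendsto (fun t => ∫ z : Circle, (z : ℂ) ^ (n t + j) ∂ν) atTop
      (nhds (a * ∫ z : Circle, (z : ℂ) ^ j ∂ν)) := by
  have e : ∀ t, ∫ z : Circle, (z : ℂ) ^ (n t + j) ∂ν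
      = (inner ℂ ((U ^ (n t)) ((U ^ j) ξ)) ξ : ℂ) := by
    intro t
    rw [hξ (n t + j), zpow_add]
    rfl
  simp only [e, hξ j]
  exact hU ((U ^ j) ξ) ξ

/-- If `U^{n_t} → a·I` and `V^{n_t} → b·I` in the weak operator
topology along a common sequence `(n_t)` of integers, with `a ≠ b`, then the measures
of maximal spectral type of `U` and `V` are mutually singular. -/
theorem mutually_singular_of_different_weak_limits
    {H₁ H₂ : Type*} [NormedAddCommGroup H₁] [InnerProductSpace ℂ H₁] [CompleteSpace H₁]
    [NormedAddCommGroup H₂] [InnerProductSpace ℂ H₂] [CompleteSpace H₂]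
    (U : H₁ ≃ₗᵢ[ℂ] H₁) (V : H₂ ≃ₗᵢ[ℂ] H₂)
    (n : ℕ → ℤ) (a b : ℂ) (hab : a ≠ b)
    (hU : ∀ ξ η : H₁, Tendsto (fun t => (inner ℂ ((U ^ n t) ξ) η : ℂ)) atTop
      (nhds (a * (inner ℂ ξ η : ℂ))))
    (hV : ∀ ξ η : H₂, Tendsto (fun t => (inner ℂ ((V ^ n t) ξ) η : ℂ)) atTop
      (nhds (b * (inner ℂ ξ η : ℂ))))
    (νU νV : Measure Circle) [IsFiniteMeasure νU] [IsFiniteMeasure νV]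
    (hνU : IsMaximalSpectralType U νU) (hνV : IsMaximalSpectralType V νV) :
    νU ⟂ₘ νV := by
  obtain ⟨⟨ξ, hξ⟩, -⟩ := hνU
  obtain ⟨⟨η, hη⟩, -⟩ := hνV
  have hU' := fourier_hyp_of_weak hξ n a hU
  have hV' := fourier_hyp_of_weak hη n b hV
  set ρ := νV.withDensity (νU.rnDeriv νV) with hρdef
  have hle : ρ ≤ νU := Measure.withDensity_rnDeriv_le νU νV
  haveI : IsFiniteMeasure ρ := isFiniteMeasure_of_le νU hle
  have hρV : ρ ≪ νV := withDensity_absolutelyContinuous _ _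
  have hρU : ρ ≪ νU := Measure.absolutelyContinuous_of_le hle
  have t1 := tendsto_integral_zpow_of_ac νU a n hU' ρ hρU
  have t2 := tendsto_integral_zpow_of_ac νV b n hV' ρ hρV
  have heq : a * ((ρ Set.univ).toReal : ℂ) = b * ((ρ Set.univ).toReal : ℂ) :=
    tendsto_nhds_unique t1 t2
  have hz : ((ρ Set.univ).toReal : ℂ) = 0 := by
    by_contra hm
    exact hab (mul_right_cancel₀ hm heq)
  have h0 : ρ Set.univ = 0 := by
    have h1 : (ρ Set.univ).toReal = 0 := by exact_mod_cast hz
    rw [ENNReal.toReal_eq_zero_iff] at h1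
    exact h1.resolve_right (measure_ne_top ρ _)
  have hρ0 : ρ = 0 := Measure.measure_univ_eq_zero.mp h0
  have hsing : νU = νU.singularPart νV := by
    conv_lhs => rw [νU.haveLebesgueDecomposition_add νV]
    rw [← hρdef, hρ0, add_zero]
  rw [hsing]
  exact Measure.mutuallySingular_singularPart νU νV
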